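/- arXiv:1410.4124 — 2 statements merged into one kernel-verified Lean document; each statement's English description precedes it below -/
import Mathlib

section
/- The function u₁ = −10γ²u₀ + (15/2)u₀², with u₀(x) = 2γ² sech²(γx) and c₀ = 4γ², c₁ = c₀², satisfies the order-ε² equation u₀'''' + u₁'' + 6u₀u₁ − c₀u₁ − c₁u₀ = 0 for all real x. -/
noncomputable def thAux (γ x : ℝ) : ℝ := Real.sinh (γ * x) / Real.cosh (γ * x)

lemma thAux_hasDeriv (γ x : ℝ) :
    HasDerivAt (fun y => thAux γ y) (γ * (1 - thAux γ x ^ 2)) x := by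
  have hc : Real.cosh (γ * x) ≠ 0 := (Real.cosh_pos _).ne'
  have hid : HasDerivAt (fun y : ℝ => γ * y) γ x := by
    simpa using (hasDerivAt_id x).const_mul γ
  have hs : HasDerivAt (fun y => Real.sinh (γ * y)) (Real.cosh (γ * x) * γ) x :=
    (Real.hasDerivAt_sinh (γ * x)).comp x hid
  have hch : HasDerivAt (fun y => Real.cosh (γ * y)) (Real.sinh (γ * x) * γ) x :=
    (Real.hasDerivAt_cosh (γ * x)).comp x hid
  have h := hs.div hch hc
  convert h using 1
  any_goals rfl
  unfold thAux
  all_goals field_simp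
  all_goals linear_combination (-γ) * Real.cosh_sq_sub_sinh_sq (γ * x)

lemma polyAux_hasDeriv (γ x a₀ a₁ a₂ a₃ a₄ a₅ : ℝ) :
    HasDerivAt (fun y => a₀ + a₁ * thAux γ y + a₂ * thAux γ y ^ 2 + a₃ * thAux γ y ^ 3
      + a₄ * thAux γ y ^ 4 + a₅ * thAux γ y ^ 5)
      ((a₁ + 2*a₂*thAux γ x + 3*a₃*thAux γ x ^ 2 + 4*a₄*thAux γ x ^ 3 + 5*a₅*thAux γ x ^ 4)
        * (γ * (1 - thAux γ x ^ 2))) x := by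
  have h := thAux_hasDeriv γ x
  have H := ((((hasDerivAt_const x a₀).add (h.const_mul a₁)).add
      ((h.pow 2).const_mul a₂)).add ((h.pow 3).const_mul a₃)).add ((h.pow 4).const_mul a₄)
  have H2 := H.add ((h.pow 5).const_mul a₅)
  convert H2 using 1
  any_goals rfl
  all_goals push_cast
  all_goals ring

theorem stmt6 (γ : ℝ) (hγ : γ ≠ 0)
    (u₀ u₁ : ℝ → ℝ) (c₀ c₁ : ℝ)
    (hu₀ : ∀ x, u₀ x = 2 * γ^2 * (1 / Real.cosh (γ * x))^2)
    (hc₀ : c₀ = 4 * γ^2) (hc₁ : c₁ = c₀^2)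
    (hu₁ : ∀ x, u₁ x = -10 * γ^2 * u₀ x + (15/2) * (u₀ x)^2) :
    ∀ x : ℝ,
      iteratedDeriv 4 u₀ x + deriv (deriv u₁) x + 6 * u₀ x * u₁ x
        - c₀ * u₁ x - c₁ * u₀ x = 0 := by
  have key0 : ∀ z, u₀ z = 2 * γ^2 * (1 - thAux γ z ^ 2) := by
    intro z
    rw [hu₀ z]
    unfold thAux
    have hc : Real.cosh (γ * z) ≠ 0 := (Real.cosh_pos _).ne'
    have h1 := Real.cosh_sq_sub_sinh_sq (γ * z)
    all_goals field_simp
    all_goals linear_combination (-1) * h1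
  have e0 : u₀ = fun y => (2*γ^2) + 0 * thAux γ y + (-2*γ^2) * thAux γ y ^ 2
      + 0 * thAux γ y ^ 3 + 0 * thAux γ y ^ 4 + 0 * thAux γ y ^ 5 :=
    funext fun z => by rw [key0 z]; ring
  have e1 : u₁ = fun y => (10*γ^4) + 0 * thAux γ y + (-40*γ^4) * thAux γ y ^ 2
      + 0 * thAux γ y ^ 3 + (30*γ^4) * thAux γ y ^ 4 + 0 * thAux γ y ^ 5 :=
    funext fun z => by rw [hu₁ z, key0 z]; ring
  have hd0 : deriv (fun y => (2*γ^2) + 0 * thAux γ y + (-2*γ^2) * thAux γ y ^ 2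
      + 0 * thAux γ y ^ 3 + 0 * thAux γ y ^ 4 + 0 * thAux γ y ^ 5)
      = fun y => 0 + (-4*γ^3) * thAux γ y + 0 * thAux γ y ^ 2
      + (4*γ^3) * thAux γ y ^ 3 + 0 * thAux γ y ^ 4 + 0 * thAux γ y ^ 5 :=
    funext fun z => by rw [(polyAux_hasDeriv γ z (2*γ^2) 0 (-2*γ^2) 0 0 0).deriv]; ring
  have hd1 : deriv (fun y => 0 + (-4*γ^3) * thAux γ y + 0 * thAux γ y ^ 2
      + (4*γ^3) * thAux γ y ^ 3 + 0 * thAux γ y ^ 4 + 0 * thAux γ y ^ 5)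
      = fun y => (-4*γ^4) + 0 * thAux γ y + (16*γ^4) * thAux γ y ^ 2
      + 0 * thAux γ y ^ 3 + (-12*γ^4) * thAux γ y ^ 4 + 0 * thAux γ y ^ 5 :=
    funext fun z => by rw [(polyAux_hasDeriv γ z 0 (-4*γ^3) 0 (4*γ^3) 0 0).deriv]; ring
  have hd2 : deriv (fun y => (-4*γ^4) + 0 * thAux γ y + (16*γ^4) * thAux γ y ^ 2
      + 0 * thAux γ y ^ 3 + (-12*γ^4) * thAux γ y ^ 4 + 0 * thAux γ y ^ 5)
      = fun y => 0 + (32*γ^5) * thAux γ y + 0 * thAux γ y ^ 2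
      + (-80*γ^5) * thAux γ y ^ 3 + 0 * thAux γ y ^ 4 + (48*γ^5) * thAux γ y ^ 5 :=
    funext fun z => by rw [(polyAux_hasDeriv γ z (-4*γ^4) 0 (16*γ^4) 0 (-12*γ^4) 0).deriv]; ring
  have hw0 : deriv (fun y => (10*γ^4) + 0 * thAux γ y + (-40*γ^4) * thAux γ y ^ 2
      + 0 * thAux γ y ^ 3 + (30*γ^4) * thAux γ y ^ 4 + 0 * thAux γ y ^ 5)
      = fun y => 0 + (-80*γ^5) * thAux γ y + 0 * thAux γ y ^ 2
      + (200*γ^5) * thAux γ y ^ 3 + 0 * thAux γ y ^ 4 + (-120*γ^5) * thAux γ y ^ 5 :=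
    funext fun z => by rw [(polyAux_hasDeriv γ z (10*γ^4) 0 (-40*γ^4) 0 (30*γ^4) 0).deriv]; ring
  intro x
  have h4 : iteratedDeriv 4 u₀ x = deriv (deriv (deriv (deriv u₀))) x := by
    simp [iteratedDeriv_succ, iteratedDeriv_zero]
  rw [h4, hu₁ x, key0 x, e0, e1, hd0, hd1, hd2, hw0,
    (polyAux_hasDeriv γ x 0 (32*γ^5) 0 (-80*γ^5) 0 (48*γ^5)).deriv,
    (polyAux_hasDeriv γ x 0 (-80*γ^5) 0 (200*γ^5) 0 (-120*γ^5)).deriv,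
    hc₁, hc₀]
  beta_reduce
  ring
end

section
/- With N = r/(2ε) and |χ| = r, the truncation term ε^{2N}Γ(2N+γ)/|χ|^{2N+γ} is exponentially small: using Stirling's formula, ε^{2N}Γ(2N+γ)/r^{2N+γ} ~ √(2π)(r/ε)^{γ−1/2} r^{−γ} e^{−r/ε} as ε → 0⁺ along values with r/(2ε) a positive integer. -/
open Real Filter

lemma gammaProd (x : ℝ) (hx : 0 < x) (n : ℕ) :
    Real.Gamma (x + n) = Real.Gamma x * ∏ i ∈ Finset.range n, (x + i) := by
  induction n with
  | zero => simp
  | succ n ih =>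
    have h : x + ((n : ℝ) + 1) = (x + n) + 1 := by ring
    rw [Nat.cast_succ, h, Real.Gamma_add_one (by positivity), ih, Finset.prod_range_succ]
    ring

lemma tendstoGammaRatio (x : ℝ) (hx0 : 0 < x) :
    Tendsto (fun n : ℕ => Real.Gamma (x + n + 1) / ((n : ℝ) ^ x * (n.factorial : ℝ))) atTop (nhds 1) := by
  have hG : Real.Gamma x ≠ 0 := (Real.Gamma_pos_of_pos hx0).ne'
  have h := (tendsto_const_nhds (x := Real.Gamma x)).div (Real.GammaSeq_tendsto_Gamma x) hG
  rw [div_self hG] at h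
  refine h.congr fun n => ?_
  unfold Real.GammaSeq
  simp only [Pi.div_apply]
  rw [div_div_eq_mul_div]
  congr 1
  have := gammaProd x hx0 (n + 1)
  push_cast at this
  rw [show x + ((n : ℝ) + 1) = x + n + 1 by ring] at this
  rw [← this]

lemma tendstoFactRatio :
    Tendsto (fun n : ℕ => (n.factorial : ℝ) /
      (Real.sqrt (2 * Real.pi) * (n : ℝ) ^ ((n : ℝ) + 1/2) * Real.exp (-(n : ℝ))))
      atTop (nhds 1) := by
  have hpi : Real.sqrt Real.pi ≠ 0 := by positivity
  have h := (Stirling.tendsto_stirlingSeq_sqrt_pi).div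
    (tendsto_const_nhds (x := Real.sqrt Real.pi)) hpi
  rw [div_self hpi] at h
  refine h.congr' ?_
  filter_upwards [eventually_ge_atTop 1] with n hn
  have hn0 : (0 : ℝ) < n := by exact_mod_cast hn
  unfold Stirling.stirlingSeq
  simp only [Pi.div_apply]
  rw [div_div]
  congr 1
  have h1 : (n:ℝ) ^ ((n:ℝ) + 1/2) = (n:ℝ) ^ (n : ℕ) * Real.sqrt n := by
    rw [Real.rpow_add hn0, Real.rpow_natCast, Real.sqrt_eq_rpow]
  rw [h1, div_pow, Real.sqrt_mul (by norm_num : (0:ℝ) ≤ 2),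
    Real.sqrt_mul (by norm_num : (0:ℝ) ≤ 2) Real.pi, Real.exp_neg,
    show Real.exp (n:ℝ) = Real.exp 1 ^ n by rw [← Real.exp_nat_mul]; norm_num]
  field_simp

lemma tendstoGammaStirling (x : ℝ) (hx0 : 0 < x) :
    Tendsto (fun n : ℕ => Real.Gamma (x + n + 1) /
      (Real.sqrt (2 * Real.pi) * (n : ℝ) ^ ((n : ℝ) + x + 1/2) * Real.exp (-(n : ℝ))))
      atTop (nhds 1) := by
  have h := (tendstoGammaRatio x hx0).mul tendstoFactRatio
  rw [mul_one] at h
  refine h.congr' ?_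
  filter_upwards [eventually_ge_atTop 1] with n hn
  have hn0 : (0:ℝ) < n := by exact_mod_cast hn
  have hsplit : (n:ℝ) ^ ((n:ℝ) + x + 1/2) = (n:ℝ) ^ x * (n:ℝ) ^ ((n:ℝ) + 1/2) := by
    rw [← Real.rpow_add hn0]; ring_nf
  have hf : (n.factorial : ℝ) ≠ 0 := by positivity
  have hx : (n:ℝ) ^ x ≠ 0 := by positivity
  have h2 : (n:ℝ) ^ ((n:ℝ) + 1/2) ≠ 0 := by positivity
  have hs : Real.sqrt (2 * Real.pi) ≠ 0 := by positivity
  have he : Real.exp (-(n:ℝ)) ≠ 0 := Real.exp_ne_zero _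
  rw [hsplit]
  field_simp

theorem stmt8 (r γ : ℝ) (hr : 0 < r) :
    Filter.Tendsto
      (fun n : ℕ =>
        (let ε := r / (2 * (n + 1 : ℝ));
          (ε ^ (r / ε) * Real.Gamma (r / ε + γ) / r ^ (r / ε + γ)) /
          (Real.sqrt (2 * Real.pi) * (r / ε) ^ (γ - 1/2) * r ^ (-γ) *
            Real.exp (-(r / ε)))))
      Filter.atTop (nhds 1) := by
  set q : ℤ := ⌈γ⌉ - 1 with hq
  set c : ℝ := (q : ℝ) with hc
  set x : ℝ := γ - c with hxdef
  have hx0 : 0 < x := by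
    have := Int.ceil_lt_add_one γ
    simp only [hxdef, hc, hq]
    push_cast
    linarith
  set k : ℕ → ℕ := fun n => (2 * (n : ℤ) + 1 + q).toNat with hkdef
  have hk : Tendsto k atTop atTop := by
    refine tendsto_atTop_mono' atTop ?_ tendsto_id
    filter_upwards [eventually_ge_atTop q.natAbs] with n hn
    simp only [hkdef, id_eq]
    omega
  have hg : Tendsto (fun n : ℕ => Real.Gamma (x + k n + 1) /
      (Real.sqrt (2 * Real.pi) * (k n : ℝ) ^ ((k n : ℝ) + x + 1/2) *
        Real.exp (-(k n : ℝ)))) atTop (nhds 1) :=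
    (tendstoGammaStirling x hx0).comp hk
  have hm : Tendsto (fun n : ℕ => 2 * ((n : ℝ) + 1)) atTop atTop := by
    apply tendsto_atTop_atTop_of_monotone
    · intro a b hab
      have : (a:ℝ) ≤ b := by exact_mod_cast hab
      dsimp only
      linarith
    · intro b
      obtain ⟨n, hn⟩ := exists_nat_ge b
      exact ⟨n, by linarith⟩
  -- correction factor tends to 1
  have hbase : Tendsto (fun n : ℕ => 1 + (c - 1) / (2 * ((n : ℝ) + 1))) atTop (nhds 1) := by
    have := (tendsto_const_nhds (x := c - 1)).div_atTop hm
    simpa using (tendsto_const_nhds (x := (1:ℝ))).add this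
  have h1 : Tendsto (fun n : ℕ => (1 + (c - 1) / (2 * ((n : ℝ) + 1))) ^ (2 * ((n : ℝ) + 1)))
      atTop (nhds (Real.exp (c - 1))) :=
    (tendsto_one_add_div_rpow_exp (c - 1)).comp hm
  have h2 : Tendsto (fun n : ℕ => (1 + (c - 1) / (2 * ((n : ℝ) + 1))) ^ (γ - 1/2))
      atTop (nhds 1) := by
    have := hbase.rpow_const (p := γ - 1/2) (Or.inl one_ne_zero)
    simpa using this
  have hcorr : Tendsto (fun n : ℕ =>
      (1 + (c - 1) / (2 * ((n : ℝ) + 1))) ^ (2 * ((n : ℝ) + 1) + γ - 1/2) *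
        Real.exp (1 - c)) atTop (nhds 1) := by
    have hprod := (h1.mul h2).mul (tendsto_const_nhds (x := Real.exp (1 - c)))
    have : Real.exp (c - 1) * 1 * Real.exp (1 - c) = 1 := by
      rw [mul_one, ← Real.exp_add]; norm_num
    rw [this] at hprod
    refine hprod.congr' ?_
    filter_upwards [hm.eventually_ge_atTop (|c - 1| + 1)] with n hn
    have hb : (0:ℝ) < 1 + (c - 1) / (2 * ((n : ℝ) + 1)) := by
      have h1' : |c - 1| < 2 * ((n:ℝ) + 1) := by linarith
      have h2' : (0:ℝ) < 2 * ((n:ℝ) + 1) := by positivity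
      have h3' : -(1:ℝ) < (c - 1) / (2 * ((n:ℝ) + 1)) := by
        rw [lt_div_iff₀ h2']
        nlinarith [neg_abs_le (c - 1)]
      linarith
    rw [show 2 * ((n : ℝ) + 1) + γ - 1/2 = 2 * ((n : ℝ) + 1) + (γ - 1/2) by ring,
      Real.rpow_add hb]
  have hfinal := hg.mul hcorr
  rw [mul_one] at hfinal
  refine hfinal.congr' ?_
  filter_upwards [eventually_ge_atTop q.natAbs, hm.eventually_ge_atTop (|c - 1| + 1)]
    with n hn hn'
  set m : ℝ := 2 * ((n : ℝ) + 1) with hmdef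
  have hm0 : (0:ℝ) < m := by positivity
  have hKval : ((k n : ℕ) : ℝ) = m + c - 1 := by
    have hnn : (0:ℤ) ≤ 2 * (n : ℤ) + 1 + q := by omega
    simp only [hkdef]
    have hcast : (((2 * (n:ℤ) + 1 + q).toNat : ℕ) : ℝ) = ((2 * (n:ℤ) + 1 + q : ℤ) : ℝ) := by
      exact_mod_cast congrArg (fun z : ℤ => (z : ℝ)) (Int.toNat_of_nonneg hnn)
    rw [hcast]
    push_cast [hmdef, hc]
    ring
  have habs : (1:ℝ) - c ≤ |c - 1| := by rw [abs_sub_comm]; exact le_abs_self _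
  have hKpos : (0:ℝ) < ((k n : ℕ) : ℝ) := by rw [hKval]; linarith
  have hKx : x + ((k n : ℕ) : ℝ) + 1 = m + γ := by rw [hKval, hxdef]; ring
  have hKe : ((k n : ℕ) : ℝ) + x + 1/2 = m + γ - 1/2 := by rw [hKval, hxdef]; ring
  have hbK : 1 + (c - 1) / m = ((k n : ℕ) : ℝ) / m := by
    rw [hKval]; field_simp; ring
  have hexpK : Real.exp (-((k n : ℕ) : ℝ)) = Real.exp (-m) * Real.exp (1 - c) := by
    rw [hKval, show -(m + c - 1) = -m + (1 - c) by ring, Real.exp_add]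
  have hrm : r / (r / m) = m := by
    rw [div_div_eq_mul_div, mul_comm, mul_div_assoc, div_self hr.ne', mul_one]
  simp only [hmdef] at *
  simp only [hrm, hKx, hKe, hbK, hexpK]
  rw [Real.div_rpow hKpos.le (by positivity), Real.div_rpow hr.le (by positivity),
    Real.rpow_add hr, Real.rpow_neg hr.le,
    show 2 * ((n:ℝ) + 1) + γ - 1/2 = 2 * ((n:ℝ) + 1) + (γ - 1/2) by ring,
    Real.rpow_add (by positivity : (0:ℝ) < 2 * ((n:ℝ) + 1))]
  have hKne : ((k n : ℕ) : ℝ) ^ (2 * ((n:ℝ) + 1) + (γ - 1/2)) ≠ 0 :=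
    (Real.rpow_pos_of_pos hKpos _).ne'
  have hm1 : (0:ℝ) < 2 * ((n:ℝ) + 1) := by positivity
  have hmm : ((2 * ((n:ℝ) + 1)) : ℝ) ^ (2 * ((n:ℝ) + 1)) ≠ 0 := (Real.rpow_pos_of_pos hm1 _).ne'
  have hmg : ((2 * ((n:ℝ) + 1)) : ℝ) ^ (γ - 1/2) ≠ 0 := (Real.rpow_pos_of_pos hm1 _).ne'
  have hrm' : r ^ (2 * ((n:ℝ) + 1)) ≠ 0 := (Real.rpow_pos_of_pos hr _).ne'
  have hrg : r ^ γ ≠ 0 := (Real.rpow_pos_of_pos hr _).ne'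
  have hs : Real.sqrt (2 * Real.pi) ≠ 0 := by positivity
  field_simp
end
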